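/- Pittie–Steinberg theorem for SU(2): the Laurent polynomial ring R = LaurentPolynomial ℤ is a free module of rank 2 over the subalgebra A = Algebra.adjoin ℤ {T 1 + T (−1)} (the invariant subring ℤ[x + x⁻¹]) with basis {1, T 1}; that is, for every u ∈ R there exist unique p, q ∈ A such that u = p + q·(T 1). -/

import Mathlib

open LaurentPolynomial

noncomputable section

namespace PSsu2

abbrev A : Subalgebra ℤ (LaurentPolynomial ℤ) :=
  Algebra.adjoin ℤ ({T 1 + T (-1)} : Set (LaurentPolynomial ℤ))

def P (u : LaurentPolynomial ℤ) : Prop :=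
  ∃ p q : LaurentPolynomial ℤ, p ∈ A ∧ q ∈ A ∧ u = p + q * T 1

lemma s_mem : (T 1 + T (-1) : LaurentPolynomial ℤ) ∈ A :=
  Algebra.subset_adjoin rfl

lemma P_add {u v} (hu : P u) (hv : P v) : P (u + v) := by
  obtain ⟨p, q, hp, hq, rfl⟩ := hu
  obtain ⟨p', q', hp', hq', rfl⟩ := hv
  exact ⟨p + p', q + q', add_mem hp hp', add_mem hq hq', by ring⟩

lemma P_smul {a u} (ha : a ∈ A) (hu : P u) : P (a * u) := by
  obtain ⟨p, q, hp, hq, rfl⟩ := hu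
  exact ⟨a * p, a * q, mul_mem ha hp, mul_mem ha hq, by ring⟩

lemma P_sub {u v} (hu : P u) (hv : P v) : P (u - v) := by
  obtain ⟨p, q, hp, hq, rfl⟩ := hu
  obtain ⟨p', q', hp', hq', rfl⟩ := hv
  exact ⟨p - p', q - q', sub_mem hp hp', sub_mem hq hq', by ring⟩

lemma P_T (n : ℤ) : P (T n) := by
  have key : ∀ m : ℕ, P (T (m : ℤ)) ∧ P (T (-(m : ℤ))) := by
    intro m
    induction m using Nat.strong_induction_on with
    | _ m ih =>
      match m with
      | 0 => exact ⟨⟨1, 0, one_mem _, zero_mem _, by simp⟩,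
                    ⟨1, 0, one_mem _, zero_mem _, by simp⟩⟩
      | 1 =>
        constructor
        · exact ⟨0, 1, zero_mem _, one_mem _, by simp⟩
        · refine ⟨T 1 + T (-1), -1, s_mem, neg_mem (one_mem _), ?_⟩
          push_cast; ring
      | (m + 2) =>
        have h1 := ih (m + 1) (by omega)
        have h0 := ih m (by omega)
        constructor
        · have : (T ((m + 2 : ℕ) : ℤ) : LaurentPolynomial ℤ) =
              (T 1 + T (-1)) * T ((m + 1 : ℕ) : ℤ) - T ((m : ℕ) : ℤ) := by
            push_cast
            rw [add_mul, ← T_add, ← T_add]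
            ring_nf
          rw [this]
          exact P_sub (P_smul s_mem h1.1) h0.1
        · have : (T (-((m + 2 : ℕ) : ℤ)) : LaurentPolynomial ℤ) =
              (T 1 + T (-1)) * T (-((m + 1 : ℕ) : ℤ)) - T (-((m : ℕ) : ℤ)) := by
            push_cast
            rw [add_mul, ← T_add, ← T_add]
            ring_nf
          rw [this]
          exact P_sub (P_smul s_mem h1.2) h0.2
  rcases Int.natAbs_eq n with h | h
  · rw [h]; exact (key n.natAbs).1
  · rw [h]; exact (key n.natAbs).2

lemma P_all (u : LaurentPolynomial ℤ) : P u := by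
  induction u using LaurentPolynomial.induction_on' with
  | add p q hp hq => exact P_add hp hq
  | C_mul_T n a =>
    have hC : (C a : LaurentPolynomial ℤ) ∈ A := by
      rw [C_eq_algebraMap]
      exact Subalgebra.algebraMap_mem A a
    exact P_smul hC (P_T n)

/-- the involution x ↦ x⁻¹ -/
def τ : LaurentPolynomial ℤ ≃ₐ[ℤ] LaurentPolynomial ℤ :=
  AddMonoidAlgebra.domCongr ℤ ℤ (AddEquiv.neg ℤ)

lemma τ_T (n : ℤ) : τ (T n) = T (-n) := by
  show AddMonoidAlgebra.domCongr ℤ ℤ (AddEquiv.neg ℤ) (AddMonoidAlgebra.single n 1) = AddMonoidAlgebra.single (-n) 1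
  rw [AddMonoidAlgebra.domCongr_single]
  rfl

lemma τ_fix {a : LaurentPolynomial ℤ} (ha : a ∈ A) : τ a = a := by
  induction ha using Algebra.adjoin_induction with
  | mem x hx =>
    rcases hx with rfl
    rw [map_add, τ_T, τ_T, add_comm]; norm_num
  | algebraMap r => exact AlgEquiv.commutes τ r
  | add x y _ _ hx hy => rw [map_add, hx, hy]
  | mul x y _ _ hx hy => rw [map_mul, hx, hy]

lemma T_sub_ne : (T 1 - T (-1) : LaurentPolynomial ℤ) ≠ 0 := by
  intro h
  have h' : (T 1 : LaurentPolynomial ℤ) = T (-1) := sub_eq_zero.mp h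
  have h1 := congrArg (fun f : LaurentPolynomial ℤ => f.coeff 1) h'
  simp [T_apply] at h1

end PSsu2

open PSsu2 in
theorem pittie_steinberg_su2 (u : LaurentPolynomial ℤ) :
    ∃! pq : (Algebra.adjoin ℤ ({T 1 + T (-1)} : Set (LaurentPolynomial ℤ))) ×
            (Algebra.adjoin ℤ ({T 1 + T (-1)} : Set (LaurentPolynomial ℤ))),
      u = (pq.1 : LaurentPolynomial ℤ) + (pq.2 : LaurentPolynomial ℤ) * T 1 := by
  obtain ⟨p, q, hp, hq, rfl⟩ := P_all u
  refine ⟨(⟨p, hp⟩, ⟨q, hq⟩), rfl, ?_⟩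
  rintro ⟨⟨p', hp'⟩, ⟨q', hq'⟩⟩ h
  simp only [Prod.mk.injEq, Subtype.ext_iff]
  dsimp at h
  have key : (q' - q) * (T 1 - T (-1)) = 0 := by
    have h2 := congrArg τ h
    rw [map_add, map_add, map_mul, map_mul, τ_fix hp', τ_fix hq', τ_fix hp, τ_fix hq,
      τ_T] at h2
    linear_combination h2 - h
  have hq0 : q' = q := by
    rcases mul_eq_zero.mp key with h0 | h0
    · exact sub_eq_zero.mp h0
    · exact absurd h0 T_sub_ne
  subst hq0
  have : p' = p := by linear_combination -h
  exact ⟨this, rfl⟩
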